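/- Let (x̄,λ̄) be a solution of the KKT system ∇_xL(x,λ) = 0, λ ∈ ∂θ(Φ(x)) for the ENLP, and assume the second-order sufficient condition holds: ⟨∇²_{xx}L(x̄,λ̄)w, w⟩ + 2θ_{K,B}(∇Φ(x̄)w) > 0 for every w ∈ ℝ^n \ {0} with ∇Φ(x̄)w ∈ K* + rge B. Then λ̄ is a noncritical Lagrange multiplier for the KKT system corresponding to x̄, i.e., the only ξ ∈ ℝ^n satisfying 0 ∈ ∇²_{xx}L(x̄,λ̄)ξ + ∇Φ(x̄)* D(∂θ)(Φ(x̄),λ̄)(∇Φ(x̄)ξ) is ξ = 0. -/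

import Mathlib

open Filter Topology Metric Set Pointwise
open scoped RealInnerProductSpace

noncomputable section

/-- Euclidean space ℝ^k. -/
abbrev Evec (k : ℕ) : Type := EuclideanSpace ℝ (Fin k)

/-- The Bouligand tangent cone to `Ω` at `z`: limits of `α_k (z_k - z)` with
`z_k → z` in `Ω` and `α_k ≥ 0`. -/
def bTangentCone {F : Type*} [NormedAddCommGroup F] [NormedSpace ℝ F]
    (Ω : Set F) (z : F) : Set F :=
  {w | ∃ (zs : ℕ → F) (a : ℕ → ℝ), (∀ k, zs k ∈ Ω) ∧ (∀ k, 0 ≤ a k) ∧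
    Tendsto zs atTop (𝓝 z) ∧ Tendsto (fun k => a k • (zs k - z)) atTop (𝓝 w)}

/-- Graph of a set-valued mapping. -/
def svGraph {A B : Type*} (F : A → Set B) : Set (A × B) := {p | p.2 ∈ F p.1}

/-- Graphical derivative of a set-valued mapping at `(z, w)` in direction `u`. -/
def gDeriv {A B : Type*} [NormedAddCommGroup A] [NormedSpace ℝ A]
    [NormedAddCommGroup B] [NormedSpace ℝ B]
    (F : A → Set B) (z : A) (w : B) (u : A) : Set B :=
  {v | (u, v) ∈ bTangentCone (svGraph F) (z, w)}

/-- A convex polyhedral set: a finite intersection of closed half-spaces. -/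
def IsPolyhedral {k : ℕ} (Y : Set (Evec k)) : Prop :=
  ∃ (p : ℕ) (b : Fin p → Evec k) (c : Fin p → ℝ), Y = {y | ∀ i, ⟪b i, y⟫ ≤ c i}

/-- The piecewise linear-quadratic penalty θ_{Y,B}. -/
def thetaY {k : ℕ} (Y : Set (Evec k)) (B : Evec k →L[ℝ] Evec k) (u : Evec k) : EReal :=
  ⨆ y ∈ Y, ((⟪y, u⟫ - (1 / 2) * ⟪y, B y⟫ : ℝ) : EReal)

/-- Subdifferential of convex analysis of an extended-real-valued function. -/
def subdiff {k : ℕ} (θ : Evec k → EReal) (z : Evec k) : Set (Evec k) :=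
  {v | ∀ u, θ z + ((⟪v, u - z⟫ : ℝ) : EReal) ≤ θ u}

/-- Polar cone. -/
def polarCone {k : ℕ} (K : Set (Evec k)) : Set (Evec k) :=
  {v | ∀ w ∈ K, ⟪v, w⟫ ≤ 0}

/-- Normal cone of convex analysis. -/
def convNormalCone {k : ℕ} (Ω : Set (Evec k)) (z : Evec k) : Set (Evec k) :=
  {v | ∀ w ∈ Ω, ⟪v, w - z⟫ ≤ 0}

/-- The critical cone K = T_Y(lmo) ∩ {zo - Blmo}^⊥. -/
def critCone {k : ℕ} (Y : Set (Evec k)) (B : Evec k →L[ℝ] Evec k)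
    (zo lmo : Evec k) : Set (Evec k) :=
  bTangentCone Y lmo ∩ {w | ⟪zo - B lmo, w⟫ = 0}

/-- Calmness of a set-valued mapping at a graph point. -/
def Calm {A B : Type*} [NormedAddCommGroup A] [NormedAddCommGroup B]
    (F : A → Set B) (zo : A) (wo : B) : Prop :=
  ∃ ℓ : ℝ, 0 ≤ ℓ ∧ ∃ U ∈ 𝓝 zo, ∃ V ∈ 𝓝 wo,
    ∀ z ∈ U, ∀ w ∈ F z ∩ V, ∃ w' ∈ F zo, ‖w - w'‖ ≤ ℓ * ‖z - zo‖

/-- Isolated calmness of a set-valued mapping at a graph point. -/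
def IsolCalm {A B : Type*} [NormedAddCommGroup A] [NormedAddCommGroup B]
    (F : A → Set B) (zo : A) (wo : B) : Prop :=
  ∃ ℓ : ℝ, 0 ≤ ℓ ∧ ∃ U ∈ 𝓝 zo, ∃ V ∈ 𝓝 wo,
    ∀ z ∈ U, ∀ w ∈ F z ∩ V, ‖w - wo‖ ≤ ℓ * ‖z - zo‖

/-- Robust isolated calmness of a set-valued mapping at a graph point. -/
def RobIsolCalm {A B : Type*} [NormedAddCommGroup A] [NormedAddCommGroup B]
    (F : A → Set B) (zo : A) (wo : B) : Prop :=
  ∃ ℓ : ℝ, 0 ≤ ℓ ∧ ∃ U ∈ 𝓝 zo, ∃ V ∈ 𝓝 wo,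
    (∀ z ∈ U, ∀ w ∈ F z ∩ V, ‖w - wo‖ ≤ ℓ * ‖z - zo‖) ∧
    ∀ z ∈ U, (F z ∩ V).Nonempty

/-- Lipschitz-like (Aubin) property of a set-valued mapping around a graph point. -/
def LipLike {A B : Type*} [NormedAddCommGroup A] [NormedAddCommGroup B]
    (F : A → Set B) (zo : A) (wo : B) : Prop :=
  ∃ ℓ : ℝ, 0 ≤ ℓ ∧ ∃ U ∈ 𝓝 zo, ∃ V ∈ 𝓝 wo,
    ∀ z ∈ U, ∀ z' ∈ U, ∀ w ∈ F z' ∩ V, ∃ w' ∈ F z, ‖w - w'‖ ≤ ℓ * ‖z' - z‖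

/-! ### The general variational system -/

/-- Ψ(x,λ) = f(x) + ∇Φ(x)*λ. -/
def Psi {n m : ℕ} (f : Evec n → Evec n) (Φ : Evec n → Evec m)
    (x : Evec n) (lam : Evec m) : Evec n :=
  f x + ContinuousLinearMap.adjoint (fderiv ℝ Φ x) lam

/-- Lagrange multipliers Λ(xo) of the variational system. -/
def LagMult {n m : ℕ} (Y : Set (Evec m)) (B : Evec m →L[ℝ] Evec m)
    (f : Evec n → Evec n) (Φ : Evec n → Evec m) (xo : Evec n) : Set (Evec m) :=
  {lam | Psi f Φ xo lam = 0 ∧ lam ∈ subdiff (thetaY Y B) (Φ xo)}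

/-- Solution map of the canonically perturbed variational system. -/
def SolMap {n m : ℕ} (Y : Set (Evec m)) (B : Evec m →L[ℝ] Evec m)
    (f : Evec n → Evec n) (Φ : Evec n → Evec m) :
    Evec n × Evec m → Set (Evec n × Evec m) :=
  fun p => {q | Psi f Φ q.1 q.2 = p.1 ∧ q.2 ∈ subdiff (thetaY Y B) (Φ q.1 + p.2)}

/-- Multiplier map associated with xo. -/
def MultMap {n m : ℕ} (Y : Set (Evec m)) (B : Evec m →L[ℝ] Evec m)
    (f : Evec n → Evec n) (Φ : Evec n → Evec m) (xo : Evec n) :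
    Evec n × Evec m → Set (Evec m) :=
  fun p => {lam | Psi f Φ xo lam = p.1 ∧ lam ∈ subdiff (thetaY Y B) (Φ xo + p.2)}

/-- lmo is a critical Lagrange multiplier for the variational system. -/
def IsCriticalMult {n m : ℕ} (Y : Set (Evec m)) (B : Evec m →L[ℝ] Evec m)
    (f : Evec n → Evec n) (Φ : Evec n → Evec m) (xo : Evec n) (lmo : Evec m) : Prop :=
  ∃ ξ : Evec n, ξ ≠ 0 ∧
    ∃ η ∈ gDeriv (subdiff (thetaY Y B)) (Φ xo) lmo (fderiv ℝ Φ xo ξ),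
      fderiv ℝ (fun x => Psi f Φ x lmo) xo ξ +
        ContinuousLinearMap.adjoint (fderiv ℝ Φ xo) η = 0

/-- lmo is a noncritical Lagrange multiplier for the variational system. -/
def IsNoncriticalMult {n m : ℕ} (Y : Set (Evec m)) (B : Evec m →L[ℝ] Evec m)
    (f : Evec n → Evec n) (Φ : Evec n → Evec m) (xo : Evec n) (lmo : Evec m) : Prop :=
  ∀ ξ : Evec n, ∀ η ∈ gDeriv (subdiff (thetaY Y B)) (Φ xo) lmo (fderiv ℝ Φ xo ξ),
    fderiv ℝ (fun x => Psi f Φ x lmo) xo ξ +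
      ContinuousLinearMap.adjoint (fderiv ℝ Φ xo) η = 0 → ξ = 0

/-- `u` is the proximal point of `θ` at `z`. -/
def IsProxPt {k : ℕ} (θ : Evec k → EReal) (z u : Evec k) : Prop :=
  ∀ w, θ u + ((1 / 2 * ‖z - u‖ ^ 2 : ℝ) : EReal) ≤ θ w + ((1 / 2 * ‖z - w‖ ^ 2 : ℝ) : EReal)

/-! ### ENLP -/

/-- The Lagrangian of the ENLP. -/
def Lag {n m : ℕ} (B : Evec m →L[ℝ] Evec m) (φ₀ : Evec n → ℝ) (Φ : Evec n → Evec m)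
    (x : Evec n) (lam : Evec m) : ℝ :=
  φ₀ x + ⟪Φ x, lam⟫ - (1 / 2) * ⟪lam, B lam⟫

/-- The essential objective φ = φ₀ + θ∘Φ of the ENLP. -/
def enlpPhi {n m : ℕ} (Y : Set (Evec m)) (B : Evec m →L[ℝ] Evec m)
    (φ₀ : Evec n → ℝ) (Φ : Evec n → Evec m) (x : Evec n) : EReal :=
  ((φ₀ x : ℝ) : EReal) + thetaY Y B (Φ x)

/-- Lagrange multipliers of the ENLP KKT system. -/
def LagMultCom {n m : ℕ} (Y : Set (Evec m)) (B : Evec m →L[ℝ] Evec m)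
    (φ₀ : Evec n → ℝ) (Φ : Evec n → Evec m) (xo : Evec n) : Set (Evec m) :=
  {lam | gradient (fun x => Lag B φ₀ Φ x lam) xo = 0 ∧
    lam ∈ subdiff (thetaY Y B) (Φ xo)}

/-- Solution map of the canonically perturbed KKT system of the ENLP. -/
def SKKT {n m : ℕ} (Y : Set (Evec m)) (B : Evec m →L[ℝ] Evec m)
    (φ₀ : Evec n → ℝ) (Φ : Evec n → Evec m) :
    Evec n × Evec m → Set (Evec n × Evec m) :=
  fun p => {q | gradient (fun x => Lag B φ₀ Φ x q.2) q.1 = p.1 ∧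
    q.2 ∈ subdiff (thetaY Y B) (Φ q.1 + p.2)}

/-- The Hessian ∇²_{xx}L(xo,lmo) as a continuous linear map. -/
def hessL {n m : ℕ} (B : Evec m →L[ℝ] Evec m) (φ₀ : Evec n → ℝ) (Φ : Evec n → Evec m)
    (xo : Evec n) (lmo : Evec m) : Evec n →L[ℝ] Evec n :=
  fderiv ℝ (fun x => gradient (fun x' => Lag B φ₀ Φ x' lmo) x) xo

/-- lmo is a noncritical multiplier of the KKT system of the ENLP. -/
def IsNoncriticalENLP {n m : ℕ} (Y : Set (Evec m)) (B : Evec m →L[ℝ] Evec m)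
    (φ₀ : Evec n → ℝ) (Φ : Evec n → Evec m) (xo : Evec n) (lmo : Evec m) : Prop :=
  ∀ ξ : Evec n, ∀ η ∈ gDeriv (subdiff (thetaY Y B)) (Φ xo) lmo (fderiv ℝ Φ xo ξ),
    hessL B φ₀ Φ xo lmo ξ + ContinuousLinearMap.adjoint (fderiv ℝ Φ xo) η = 0 → ξ = 0

/-- The second-order sufficient condition for the ENLP at (xo,lmo). -/
def SOSC {n m : ℕ} (Y : Set (Evec m)) (B : Evec m →L[ℝ] Evec m)
    (φ₀ : Evec n → ℝ) (Φ : Evec n → Evec m) (xo : Evec n) (lmo : Evec m) : Prop :=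
  ∀ w : Evec n, w ≠ 0 →
    fderiv ℝ Φ xo w ∈ polarCone (critCone Y B (Φ xo) lmo) + Set.range (⇑B) →
    0 < ((⟪hessL B φ₀ Φ xo lmo w, w⟫ : ℝ) : EReal) +
      2 * thetaY (critCone Y B (Φ xo) lmo) B (fderiv ℝ Φ xo w)

/-- xo is a local optimal solution of the ENLP. -/
def IsLocalOptENLP {n m : ℕ} (Y : Set (Evec m)) (B : Evec m →L[ℝ] Evec m)
    (φ₀ : Evec n → ℝ) (Φ : Evec n → Evec m) (xo : Evec n) : Prop :=
  ∃ ε > (0 : ℝ), ∀ x ∈ Metric.closedBall xo ε,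
    enlpPhi Y B φ₀ Φ xo ≤ enlpPhi Y B φ₀ Φ x

/-- The second subderivative d²φ(xo,vo)(wo). -/
def secondSubderiv {k : ℕ} (φ : Evec k → EReal) (xo vo wo : Evec k) : EReal :=
  Filter.liminf
    (fun p : ℝ × Evec k =>
      ((2 / p.1 ^ 2 : ℝ) : EReal) *
        (φ (xo + p.1 • p.2) - φ xo - ((p.1 * ⟪vo, p.2⟫ : ℝ) : EReal)))
    ((𝓝[>] (0 : ℝ)) ×ˢ 𝓝 wo)

/-- The perturbed objective of the ENLP. -/
def pObj {n m : ℕ} (Y : Set (Evec m)) (B : Evec m →L[ℝ] Evec m)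
    (φ₀ : Evec n → ℝ) (Φ : Evec n → Evec m) (p : Evec n × Evec m) (x : Evec n) : EReal :=
  ((φ₀ x - ⟪p.1, x⟫ : ℝ) : EReal) + thetaY Y B (Φ x + p.2)

/-- xo is a fully stable local optimal solution of the ENLP. -/
def FullyStable {n m : ℕ} (Y : Set (Evec m)) (B : Evec m →L[ℝ] Evec m)
    (φ₀ : Evec n → ℝ) (Φ : Evec n → Evec m) (xo : Evec n) : Prop :=
  ∃ γ > (0 : ℝ), ∃ U ∈ 𝓝 (0 : Evec n), ∃ W ∈ 𝓝 (0 : Evec m),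
    ∃ (g : Evec n × Evec m → Evec n) (mg : Evec n × Evec m → ℝ) (ℓ : ℝ), 0 ≤ ℓ ∧
      g (0, 0) = xo ∧
      (∀ p ∈ U ×ˢ W,
        {x : Evec n | ‖x - xo‖ ≤ γ ∧ ∀ x', ‖x' - xo‖ ≤ γ →
          pObj Y B φ₀ Φ p x ≤ pObj Y B φ₀ Φ p x'} = {g p}) ∧
      (∀ p ∈ U ×ˢ W, ∀ q ∈ U ×ˢ W, ‖g p - g q‖ ≤ ℓ * ‖p - q‖) ∧
      (∀ p ∈ U ×ˢ W,
        sInf (pObj Y B φ₀ Φ p '' {x | ‖x - xo‖ ≤ γ}) = ((mg p : ℝ) : EReal)) ∧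
      (∀ p ∈ U ×ˢ W, ∀ q ∈ U ×ˢ W, |mg p - mg q| ≤ ℓ * ‖p - q‖)

/-! ### Normal cones and coderivatives on products -/

/-- Regular (Fréchet) normal cone to a subset of ℝ^a × ℝ^b. -/
def regNormalCone2 {a b : ℕ} (Ω : Set (Evec a × Evec b)) (z : Evec a × Evec b) :
    Set (Evec a × Evec b) :=
  {v | ∀ ε > (0 : ℝ), ∃ δ > (0 : ℝ), ∀ w ∈ Ω, ‖w - z‖ < δ →
    ⟪v.1, w.1 - z.1⟫ + ⟪v.2, w.2 - z.2⟫ ≤ ε * ‖w - z‖}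

/-- Limiting (Mordukhovich) normal cone to a subset of ℝ^a × ℝ^b. -/
def limNormalCone2 {a b : ℕ} (Ω : Set (Evec a × Evec b)) (z : Evec a × Evec b) :
    Set (Evec a × Evec b) :=
  {v | ∃ (zs vs : ℕ → Evec a × Evec b), (∀ k, zs k ∈ Ω) ∧
    (∀ k, vs k ∈ regNormalCone2 Ω (zs k)) ∧
    Tendsto zs atTop (𝓝 z) ∧ Tendsto vs atTop (𝓝 v)}

/-- Coderivative of a set-valued mapping between Euclidean spaces. -/
def coDeriv {a b : ℕ} (F : Evec a → Set (Evec b)) (z : Evec a) (w : Evec b)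
    (v : Evec b) : Set (Evec a) :=
  {u | (u, -v) ∈ limNormalCone2 (svGraph F) (z, w)}

end
-- AUX START
lemma inner_B_comm {m : ℕ} {B : Evec m →L[ℝ] Evec m}
    (hBsym : ∀ u v : Evec m, ⟪B u, v⟫ = ⟪u, B v⟫) (x y : Evec m) :
    ⟪x, B y⟫ = ⟪y, B x⟫ := by
  rw [real_inner_comm, hBsym]

lemma Bq_expand {m : ℕ} {B : Evec m →L[ℝ] Evec m}
    (hBsym : ∀ u v : Evec m, ⟪B u, v⟫ = ⟪u, B v⟫) (x y : Evec m) :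
    ⟪x - y, B (x - y)⟫ = ⟪x, B x⟫ - 2 * ⟪y, B x⟫ + ⟪y, B y⟫ := by
  have h1 : ⟪x, B y⟫ = ⟪y, B x⟫ := inner_B_comm hBsym x y
  rw [map_sub, inner_sub_left, inner_sub_right, inner_sub_right]
  linarith

lemma thetaY_le {m : ℕ} {Y : Set (Evec m)} {B : Evec m →L[ℝ] Evec m} {u : Evec m} {M : ℝ}
    (h : ∀ y ∈ Y, ⟪y, u⟫ - (1 / 2) * ⟪y, B y⟫ ≤ M) : thetaY Y B u ≤ (M : EReal) :=
  iSup₂_le fun y hy => EReal.coe_le_coe_iff.mpr (h y hy)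

lemma le_thetaY {m : ℕ} {Y : Set (Evec m)} {B : Evec m →L[ℝ] Evec m} {u y : Evec m}
    (hy : y ∈ Y) : ((⟪y, u⟫ - (1 / 2) * ⟪y, B y⟫ : ℝ) : EReal) ≤ thetaY Y B u :=
  le_iSup₂_of_le y hy le_rfl

lemma thetaY_B_le {m : ℕ} {Y : Set (Evec m)} {B : Evec m →L[ℝ] Evec m}
    (hBsym : ∀ u v : Evec m, ⟪B u, v⟫ = ⟪u, B v⟫)
    (hBpsd : ∀ u : Evec m, 0 ≤ ⟪u, B u⟫) {y₀ : Evec m} (_ : y₀ ∈ Y) :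
    thetaY Y B (B y₀) ≤ ((1 / 2 * ⟪y₀, B y₀⟫ : ℝ) : EReal) := by
  apply thetaY_le
  intro y _
  have hp := hBpsd (y - y₀)
  rw [Bq_expand hBsym y y₀] at hp
  have h1 : ⟪y₀, B y⟫ = ⟪y, B y₀⟫ := inner_B_comm hBsym y₀ y
  linarith

lemma subdiff_mem {m : ℕ} {Y : Set (Evec m)} (hYne : Y.Nonempty)
    {p : ℕ} {b : Fin p → Evec m} {c : Fin p → ℝ}
    (hY : Y = {y | ∀ i, ⟪b i, y⟫ ≤ c i})
    {B : Evec m →L[ℝ] Evec m}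
    (hBsym : ∀ u v : Evec m, ⟪B u, v⟫ = ⟪u, B v⟫)
    (hBpsd : ∀ u : Evec m, 0 ≤ ⟪u, B u⟫)
    {z lam : Evec m} (h : lam ∈ subdiff (thetaY Y B) z) :
    lam ∈ Y ∧ ∀ y ∈ Y, ⟪z - B lam, y - lam⟫ ≤ 0 := by
  obtain ⟨y₀, hy₀⟩ := hYne
  have hbot : thetaY Y B z ≠ ⊥ := by
    intro hb
    have := le_thetaY (B := B) (u := z) hy₀
    rw [hb, le_bot_iff] at this
    exact EReal.coe_ne_bot _ this
  have htop : thetaY Y B z ≠ ⊤ := by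
    intro ht
    have h1 := h (B y₀)
    rw [ht] at h1
    have h2 := h1.trans (thetaY_B_le hBsym hBpsd hy₀)
    rw [EReal.top_add_coe] at h2
    exact (EReal.coe_lt_top _).not_ge h2
  obtain ⟨r, hr⟩ : ∃ r : ℝ, thetaY Y B z = (r : ℝ) := ⟨_, (EReal.coe_toReal htop hbot).symm⟩
  have hfle : ∀ y ∈ Y, ⟪y, z⟫ - (1 / 2) * ⟪y, B y⟫ ≤ r := by
    intro y hy
    have := le_thetaY (B := B) (u := z) hy
    rw [hr] at this
    exact EReal.coe_le_coe_iff.mp this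
  -- lam ∈ Y
  have hlamY : lam ∈ Y := by
    rw [hY]
    intro i
    have h1 := h (z + b i)
    have h2 : thetaY Y B (z + b i) ≤ ((r + c i : ℝ) : EReal) := by
      apply thetaY_le
      intro y hy
      have h3 : ⟪b i, y⟫ ≤ c i := by rw [hY] at hy; exact hy i
      have h4 := hfle y hy
      rw [inner_add_right]
      have h5 : ⟪y, b i⟫ = ⟪b i, y⟫ := real_inner_comm _ _
      linarith
    rw [hr, add_sub_cancel_left] at h1
    have h6 := h1.trans h2
    rw [← EReal.coe_add, EReal.coe_le_coe_iff] at h6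
    have h7 : ⟪b i, lam⟫ = ⟪lam, b i⟫ := real_inner_comm _ _
    linarith
  have hrle : r ≤ ⟪lam, z⟫ - (1 / 2) * ⟪lam, B lam⟫ := by
    have h1 := h (B lam)
    have h2 := h1.trans (thetaY_B_le hBsym hBpsd hlamY)
    rw [hr, ← EReal.coe_add, EReal.coe_le_coe_iff] at h2
    rw [inner_sub_right] at h2
    linarith
  refine ⟨hlamY, fun y hy => ?_⟩
  by_contra hpos
  push_neg at hpos
  set d : Evec m := y - lam with hd
  set cc : ℝ := ⟪z - B lam, d⟫ with hcc
  set Mq : ℝ := ⟪d, B d⟫ with hMq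
  have hMq0 : 0 ≤ Mq := hBpsd d
  set t : ℝ := min 1 (cc / (Mq + 1)) with ht
  have ht0 : 0 < t := lt_min one_pos (div_pos hpos (by linarith))
  have ht1 : t ≤ 1 := min_le_left _ _
  have htM : t ≤ cc / (Mq + 1) := min_le_right _ _
  have hmemt : lam + t • d ∈ Y := by
    rw [hY]
    intro i
    have hyi : ⟪b i, y⟫ ≤ c i := by rw [hY] at hy; exact hy i
    have hli : ⟪b i, lam⟫ ≤ c i := by rw [hY] at hlamY; exact hlamY i
    rw [inner_add_right, real_inner_smul_right, hd, inner_sub_right]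
    nlinarith
  have hft := hfle _ hmemt
  have hexp : ⟪lam + t • d, z⟫ - (1 / 2) * ⟪lam + t • d, B (lam + t • d)⟫ =
      (⟪lam, z⟫ - (1 / 2) * ⟪lam, B lam⟫) + t * ⟪d, z⟫ - t * ⟪d, B lam⟫
        - t ^ 2 * ((1 / 2) * Mq) := by
    have h1 : ⟪lam, B d⟫ = ⟪d, B lam⟫ := inner_B_comm hBsym lam d
    simp only [inner_add_left, inner_add_right, map_add, map_smul,
      real_inner_smul_left, real_inner_smul_right]
    rw [hMq, h1]
    ring
  rw [hexp] at hft
  have htcc : t * cc ≤ t ^ 2 * ((1 / 2) * Mq) := by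
    have hcc' : cc = ⟪d, z⟫ - ⟪d, B lam⟫ := by
      rw [hcc, real_inner_comm, inner_sub_right]
    nlinarith [hrle]
  have htM' : t * (Mq + 1) ≤ cc := by
    rw [← le_div_iff₀ (by linarith : (0:ℝ) < Mq + 1)]
    exact htM
  nlinarith [mul_le_mul_of_nonneg_left htM' (le_of_lt ht0), mul_pos ht0 hpos]

lemma exists_pos_smul_mem {m : ℕ} {Y : Set (Evec m)}
    {p : ℕ} {b : Fin p → Evec m} {c : Fin p → ℝ}
    (hY : Y = {y | ∀ i, ⟪b i, y⟫ ≤ c i})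
    {lam w : Evec m} (hlam : lam ∈ Y) (hw : w ∈ bTangentCone Y lam) :
    ∃ t : ℝ, 0 < t ∧ lam + t • w ∈ Y := by
  classical
  have hact : ∀ i, ⟪b i, lam⟫ = c i → ⟪b i, w⟫ ≤ 0 := by
    intro i hi
    obtain ⟨zs, a, hzs, ha, _, hlimw⟩ := hw
    have hlim : Tendsto (fun k => ⟪b i, a k • (zs k - lam)⟫) atTop (𝓝 ⟪b i, w⟫) :=
      tendsto_const_nhds.inner hlimw
    refine le_of_tendsto hlim (Eventually.of_forall fun k => ?_)
    have hzk : ⟪b i, zs k⟫ ≤ c i := by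
      have := hzs k; rw [hY] at this; exact this i
    rw [real_inner_smul_right, inner_sub_right]
    have := ha k
    nlinarith
  set tfun : Fin p → ℝ := fun i =>
    if 0 < ⟪b i, w⟫ then (c i - ⟪b i, lam⟫) / ⟪b i, w⟫ else 1 with htfun
  have htpos : ∀ i, 0 < tfun i := by
    intro i
    show 0 < if 0 < ⟪b i, w⟫ then (c i - ⟪b i, lam⟫) / ⟪b i, w⟫ else 1
    by_cases hbi : 0 < ⟪b i, w⟫
    · rw [if_pos hbi]
      have hle : ⟪b i, lam⟫ ≤ c i := by rw [hY] at hlam; exact hlam i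
      have hne : ⟪b i, lam⟫ ≠ c i := by
        intro he; exact absurd (hact i he) (not_le.mpr hbi)
      exact div_pos (sub_pos.mpr (lt_of_le_of_ne hle hne)) hbi
    · rw [if_neg hbi]; norm_num
  set S : Finset ℝ := insert 1 (Finset.univ.image tfun) with hS
  have hSne : S.Nonempty := ⟨1, Finset.mem_insert_self _ _⟩
  set t : ℝ := S.min' hSne with htdef
  have ht0 : 0 < t := by
    have hmem : S.min' hSne ∈ insert 1 (Finset.univ.image tfun) := S.min'_mem hSne
    rcases Finset.mem_insert.mp hmem with h1 | h1
    · rw [show t = S.min' hSne from rfl, h1]; norm_num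
    · obtain ⟨i, _, hi⟩ := Finset.mem_image.mp h1
      rw [show t = S.min' hSne from rfl, ← hi]; exact htpos i
  refine ⟨t, ht0, ?_⟩
  rw [hY]
  intro i
  have hli : ⟪b i, lam⟫ ≤ c i := by rw [hY] at hlam; exact hlam i
  rw [inner_add_right, real_inner_smul_right]
  by_cases hbi : 0 < ⟪b i, w⟫
  · have hti : t ≤ tfun i := by
      exact Finset.min'_le _ _
        (Finset.mem_insert_of_mem (Finset.mem_image_of_mem _ (Finset.mem_univ i)))
    have hti' : t ≤ (c i - ⟪b i, lam⟫) / ⟪b i, w⟫ := by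
      rw [show tfun i = if 0 < ⟪b i, w⟫ then (c i - ⟪b i, lam⟫) / ⟪b i, w⟫ else 1 from rfl,
        if_pos hbi] at hti
      exact hti
    have := (le_div_iff₀ hbi).mp hti'
    linarith
  · push_neg at hbi
    nlinarith


set_option maxHeartbeats 2000000 in
/-- The second-order sufficient condition yields noncriticality of the multiplier. -/
theorem noncritical_of_SOSC {n m : ℕ} (Y : Set (Evec m)) (hYne : Y.Nonempty) (hYpoly : IsPolyhedral Y)
    (B : Evec m →L[ℝ] Evec m) (hBsym : ∀ u v : Evec m, ⟪B u, v⟫ = ⟪u, B v⟫)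
    (hBpsd : ∀ u : Evec m, 0 ≤ ⟪u, B u⟫)
    (φ₀ : Evec n → ℝ) (hφ₀ : ContDiff ℝ 2 φ₀)
    (Φ : Evec n → Evec m) (hΦ : ContDiff ℝ 2 Φ)
    (xo : Evec n) (lmo : Evec m)
    (hkkt1 : gradient (fun x => Lag B φ₀ Φ x lmo) xo = 0)
    (hkkt2 : lmo ∈ subdiff (thetaY Y B) (Φ xo))
    (hsosc : SOSC Y B φ₀ Φ xo lmo) :
    IsNoncriticalENLP Y B φ₀ Φ xo lmo := by
  intro ξ η hη hsum
  by_contra hξ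
  obtain ⟨p, b, c, hY⟩ := hYpoly
  obtain ⟨hlamY, hlamN⟩ := subdiff_mem hYne hY hBsym hBpsd hkkt2
  set u : Evec m := fderiv ℝ Φ xo ξ with hu
  simp only [gDeriv, bTangentCone, Set.mem_setOf_eq] at hη
  obtain ⟨qs, a, hmemq, ha, hq, hqlim⟩ := hη
  set vbar : Evec m := Φ xo - B lmo with hvbar
  set zs : ℕ → Evec m := fun k => (qs k).1 with hzs
  set ls : ℕ → Evec m := fun k => (qs k).2 with hls
  have hchar : ∀ k, ls k ∈ Y ∧ ∀ y ∈ Y, ⟪zs k - B (ls k), y - ls k⟫ ≤ 0 := fun k =>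
    subdiff_mem hYne hY hBsym hBpsd (hmemq k)
  have hz : Tendsto zs atTop (𝓝 (Φ xo)) :=
    (continuous_fst.tendsto ((Φ xo, lmo) : Evec m × Evec m)).comp hq
  have hl : Tendsto ls atTop (𝓝 lmo) :=
    (continuous_snd.tendsto ((Φ xo, lmo) : Evec m × Evec m)).comp hq
  have hulim : Tendsto (fun k => a k • (zs k - Φ xo)) atTop (𝓝 u) :=
    (continuous_fst.tendsto ((u, η) : Evec m × Evec m)).comp hqlim
  have hetalim : Tendsto (fun k => a k • (ls k - lmo)) atTop (𝓝 η) :=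
    (continuous_snd.tendsto ((u, η) : Evec m × Evec m)).comp hqlim
  set vs : ℕ → Evec m := fun k => zs k - B (ls k) with hvs
  have hv : Tendsto vs atTop (𝓝 vbar) := hz.sub ((B.continuous.tendsto _).comp hl)
  set u' : Evec m := u - B η with hu'
  have hvlim : Tendsto (fun k => a k • (vs k - vbar)) atTop (𝓝 u') := by
    have h1 : ∀ k, a k • (zs k - Φ xo) - B (a k • (ls k - lmo)) = a k • (vs k - vbar) := by
      intro k
      rw [map_smul, ← smul_sub]
      congr 1
      rw [hvs, hvbar, map_sub]
      exact sub_sub_sub_comm _ _ _ _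
    exact (hulim.sub ((B.continuous.tendsto _).comp hetalim)).congr h1
  have hηT : η ∈ bTangentCone Y lmo := ⟨ls, a, fun k => (hchar k).1, ha, hl, hetalim⟩
  have hls_sub : ∀ k, ⟪vs k, ls k - lmo⟫ = -⟪vs k, lmo - ls k⟫ := by
    intro k
    rw [← inner_neg_right]
    congr 1
    abel
  have hηperp : ⟪vbar, η⟫ = 0 := by
    have hle : ⟪vbar, η⟫ ≤ 0 := by
      have hlim : Tendsto (fun k => ⟪vbar, a k • (ls k - lmo)⟫) atTop (𝓝 ⟪vbar, η⟫) :=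
        tendsto_const_nhds.inner hetalim
      refine le_of_tendsto hlim (Eventually.of_forall fun k => ?_)
      rw [real_inner_smul_right]
      exact mul_nonpos_of_nonneg_of_nonpos (ha k) (hlamN _ (hchar k).1)
    have hge : 0 ≤ ⟪vbar, η⟫ := by
      have hlim : Tendsto (fun k => ⟪vs k, a k • (ls k - lmo)⟫) atTop (𝓝 ⟪vbar, η⟫) :=
        hv.inner hetalim
      refine ge_of_tendsto hlim (Eventually.of_forall fun k => ?_)
      rw [real_inner_smul_right]
      have h2 := (hchar k).2 lmo hlamY
      refine mul_nonneg (ha k) ?_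
      rw [hls_sub k]
      linarith
    linarith
  have hηK : η ∈ critCone Y B (Φ xo) lmo := ⟨hηT, hηperp⟩
  have hge0 : 0 ≤ ⟪u', η⟫ := by
    have hlim : Tendsto (fun k => ⟪a k • (vs k - vbar), a k • (ls k - lmo)⟫) atTop
        (𝓝 ⟪u', η⟫) := hvlim.inner hetalim
    refine ge_of_tendsto hlim (Eventually.of_forall fun k => ?_)
    rw [real_inner_smul_left, real_inner_smul_right]
    have h2 := (hchar k).2 lmo hlamY
    have h4 := hlamN _ (hchar k).1
    have h5 : ⟪vs k - vbar, ls k - lmo⟫ = ⟪vs k, ls k - lmo⟫ - ⟪vbar, ls k - lmo⟫ :=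
      inner_sub_left _ _ _
    refine mul_nonneg (ha k) (mul_nonneg (ha k) ?_)
    rw [h5, hls_sub k]
    linarith
  have key : (∀ w ∈ critCone Y B (Φ xo) lmo, ⟪u', w⟫ ≤ 0) ∧ ⟪u', η⟫ = 0 := by
    by_cases hA : Tendsto a atTop atTop
    · have hc3 : ∀ w ∈ critCone Y B (Φ xo) lmo, ⟪u', w⟫ ≤ 0 := by
        rintro w ⟨hwT, hwperp⟩
        obtain ⟨t, ht0, hmemY⟩ := exists_pos_smul_mem hY hlamY hwT
        have hg : ∀ k, t * ⟪a k • (vs k - vbar), w⟫ ≤ ⟪vs k - vbar, a k • (ls k - lmo)⟫ := by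
          intro k
          have h0 := (hchar k).2 _ hmemY
          have h0' : ⟪vs k, lmo - ls k⟫ + t * ⟪vs k, w⟫ ≤ 0 := by
            have he : (lmo + t • w) - ls k = (lmo - ls k) + t • w := by abel
            rw [he, inner_add_right, real_inner_smul_right] at h0
            linarith
          have h1 : a k * (⟪vs k, lmo - ls k⟫ + t * ⟪vs k, w⟫) ≤ 0 :=
            mul_nonpos_of_nonneg_of_nonpos (ha k) h0'
          have hvw : ⟪vbar, w⟫ = 0 := hwperp
          rw [real_inner_smul_left, real_inner_smul_right]
          have e1 : ⟪vs k - vbar, w⟫ = ⟪vs k, w⟫ - ⟪vbar, w⟫ := inner_sub_left _ _ _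
          have e2 : ⟪vs k - vbar, ls k - lmo⟫ = ⟪vs k, ls k - lmo⟫ - ⟪vbar, ls k - lmo⟫ :=
            inner_sub_left _ _ _
          have e3 := hls_sub k
          have e4 : a k * ⟪vbar, ls k - lmo⟫ ≤ 0 :=
            mul_nonpos_of_nonneg_of_nonpos (ha k) (hlamN _ (hchar k).1)
          rw [e1, e2, e3, hvw]
          nlinarith [h1, e4]
        have hRHS0 : Tendsto (fun k => ⟪vs k - vbar, a k • (ls k - lmo)⟫) atTop (𝓝 0) := by
          have hprod : Tendsto
              (fun k => (a k)⁻¹ * ⟪a k • (vs k - vbar), a k • (ls k - lmo)⟫) atTop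
              (𝓝 (0 * ⟪u', η⟫)) :=
            (tendsto_inv_atTop_zero.comp hA).mul (hvlim.inner hetalim)
          rw [zero_mul] at hprod
          refine hprod.congr' ?_
          filter_upwards [hA.eventually_ge_atTop 1] with k hk
          have hk0 : a k ≠ 0 := by linarith
          rw [real_inner_smul_left]
          field_simp
        have hLHS : Tendsto (fun k => t * ⟪a k • (vs k - vbar), w⟫) atTop
            (𝓝 (t * ⟪u', w⟫)) :=
          tendsto_const_nhds.mul (hvlim.inner tendsto_const_nhds)
        have hfin : t * ⟪u', w⟫ ≤ 0 := le_of_tendsto_of_tendsto' hLHS hRHS0 hg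
        by_contra hpos
        push_neg at hpos
        exact absurd hfin (not_le.mpr (mul_pos ht0 hpos))
      exact ⟨hc3, le_antisymm (hc3 η hηK) hge0⟩
    · rw [Filter.tendsto_atTop] at hA
      push_neg at hA
      obtain ⟨M, hM⟩ := hA
      have hfreq : ∃ᶠ k in atTop, a k < M := by
        exact hM
      obtain ⟨φ, hφ, hφlt⟩ := extraction_of_frequently_atTop hfreq
      have hzero : ∀ (xs : ℕ → Evec m) (xbar : Evec m) (xlim : Evec m),
          Tendsto xs atTop (𝓝 xbar) →
          Tendsto (fun k => a k • (xs k - xbar)) atTop (𝓝 xlim) → xlim = 0 := by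
        intro xs xbar xlim hxs hxlim
        have hsub : Tendsto (fun j => a (φ j) • (xs (φ j) - xbar)) atTop (𝓝 xlim) :=
          hxlim.comp hφ.tendsto_atTop
        have hnorm : Tendsto (fun j => ‖a (φ j) • (xs (φ j) - xbar)‖) atTop (𝓝 0) := by
          have hb : ∀ j, ‖a (φ j) • (xs (φ j) - xbar)‖ ≤ |M| * ‖xs (φ j) - xbar‖ := by
            intro j
            rw [norm_smul, Real.norm_eq_abs]
            apply mul_le_mul_of_nonneg_right _ (norm_nonneg _)
            rw [abs_of_nonneg (ha (φ j))]
            exact (hφlt j).le.trans (le_abs_self M)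
          have h1 : Tendsto (fun j => xs (φ j) - xbar) atTop (𝓝 0) := by
            have h2 := (hxs.comp hφ.tendsto_atTop).sub (tendsto_const_nhds (x := xbar))
            simpa using h2
          have hz0 : Tendsto (fun j => |M| * ‖xs (φ j) - xbar‖) atTop (𝓝 0) := by
            have h3 : Tendsto (fun j => ‖xs (φ j) - xbar‖) atTop (𝓝 0) := by
              simpa using h1.norm
            simpa using h3.const_mul |M|
          exact squeeze_zero (fun j => norm_nonneg _) hb hz0
        have hten0 : Tendsto (fun j => a (φ j) • (xs (φ j) - xbar)) atTop (𝓝 0) :=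
          tendsto_zero_iff_norm_tendsto_zero.mpr hnorm
        exact tendsto_nhds_unique hsub hten0
      have hη0 : η = 0 := hzero ls lmo η hl hetalim
      have hu'0 : u' = 0 := hzero vs vbar u' hv hvlim
      refine ⟨fun w _ => ?_, ?_⟩
      · rw [hu'0]; simp
      · rw [hu'0]; simp
  obtain ⟨hc3, hc2⟩ := key
  have hmemSOSC : u ∈ polarCone (critCone Y B (Φ xo) lmo) + Set.range ⇑B := by
    rw [Set.mem_add]
    exact ⟨u', hc3, B η, ⟨η, rfl⟩, by rw [hu']; abel⟩
  have hsoscv := hsosc ξ hξ hmemSOSC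
  have hHval : ⟪hessL B φ₀ Φ xo lmo ξ, ξ⟫ = -⟪η, u⟫ := by
    have h1 : hessL B φ₀ Φ xo lmo ξ = -(ContinuousLinearMap.adjoint (fderiv ℝ Φ xo) η) :=
      eq_neg_of_add_eq_zero_left hsum
    rw [h1, inner_neg_left, ContinuousLinearMap.adjoint_inner_left]
  set Mv : ℝ := ⟪η, u⟫ - (1 / 2) * ⟪η, B η⟫ with hMv
  have hθle : thetaY (critCone Y B (Φ xo) lmo) B u ≤ (Mv : EReal) := by
    apply thetaY_le
    intro w hw
    have h1 : ⟪u', w⟫ ≤ 0 := hc3 w hw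
    have hp := hBpsd (w - η)
    rw [Bq_expand hBsym w η] at hp
    have e1 : ⟪u', w⟫ = ⟪u, w⟫ - ⟪B η, w⟫ := by rw [hu', inner_sub_left]
    have e2 : ⟪u', η⟫ = ⟪u, η⟫ - ⟪B η, η⟫ := by rw [hu', inner_sub_left]
    have e3 : ⟪B η, w⟫ = ⟪η, B w⟫ := hBsym η w
    have e4 : ⟪B η, η⟫ = ⟪η, B η⟫ := hBsym η η
    have e5 : ⟪w, u⟫ = ⟪u, w⟫ := real_inner_comm _ _
    have e6 : ⟪η, u⟫ = ⟪u, η⟫ := real_inner_comm _ _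
    have e7 : ⟪η, B w⟫ = ⟪w, B η⟫ := inner_B_comm hBsym η w
    have e8 : ⟪w, B η⟫ = ⟪η, B w⟫ := inner_B_comm hBsym w η
    linarith [hc2]
  have hcontr : ((⟪hessL B φ₀ Φ xo lmo ξ, ξ⟫ : ℝ) : EReal) +
      2 * thetaY (critCone Y B (Φ xo) lmo) B u ≤ 0 := by
    rw [hHval]
    have hMv0 : -⟪η, u⟫ + 2 * Mv = 0 := by
      have e2 : ⟪u', η⟫ = ⟪u, η⟫ - ⟪B η, η⟫ := by rw [hu', inner_sub_left]
      have e4 : ⟪B η, η⟫ = ⟪η, B η⟫ := hBsym η η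
      have e6 : ⟪η, u⟫ = ⟪u, η⟫ := real_inner_comm _ _
      rw [hMv]
      linarith [hc2]
    generalize hθ : thetaY (critCone Y B (Φ xo) lmo) B u = θv at hθle ⊢
    induction θv using EReal.rec with
    | bot =>
        rw [show (2 : EReal) * ⊥ = ⊥ from EReal.mul_bot_of_pos (by norm_num), EReal.add_bot]
        exact bot_le
    | coe s =>
        have hsM : s ≤ Mv := EReal.coe_le_coe_iff.mp hθle
        have h2 : (2 : EReal) * (s : EReal) = ((2 * s : ℝ) : EReal) := by
          norm_cast
        rw [h2, ← EReal.coe_add]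
        have hle0 : -⟪η, u⟫ + 2 * s ≤ 0 := by linarith
        exact_mod_cast hle0
    | top =>
        exact absurd hθle (by simp)
  exact absurd hsoscv (not_lt.mpr hcontr)
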